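/- The center K := Z(H) of the ℚ-algebra H is a reduced ring (it contains no nonzero nilpotent element); consequently K is isomorphic as a ℚ-algebra to a finite product of number fields. -/

import Mathlib

open scoped TensorProduct

noncomputable section

/-- Complex conjugation on `ℂ` as a `ℚ`-algebra homomorphism. -/
def conjQAlg : ℂ →ₐ[ℚ] ℂ := (Complex.conjAe.restrictScalars ℚ).toAlgHom

variable (H : Type) [Ring H] [Algebra ℚ H] [FiniteDimensional ℚ H]

/-- The conjugate-linear involution of `H_ℂ = ℂ ⊗[ℚ] H` fixing `H`. -/
def sigmaC : ℂ ⊗[ℚ] H →ₗ[ℚ] ℂ ⊗[ℚ] H :=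
  (Algebra.TensorProduct.map conjQAlg (AlgHom.id ℚ H)).toLinearMap

/-- The inclusion of `H` into `H_ℂ = ℂ ⊗[ℚ] H`. -/
def inclH : H →ₐ[ℚ] ℂ ⊗[ℚ] H := Algebra.TensorProduct.includeRight

/-- The data of a polarized weight 2 Hodge structure on a finite-dimensional `ℚ`-algebra `H`,
compatible with the ring structure:
(i) a Hodge decomposition `H_ℂ = H^{2,0} ⊕ H^{1,1} ⊕ H^{0,2}` with `σ(H^{2,0}) = H^{0,2}`,
`σ(H^{1,1}) = H^{1,1}`;
(ii) a polarization: a symmetric `ℚ`-bilinear form `B` on `H` with `ℂ`-bilinear extension `BC`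
to `H_ℂ`, whose associated Hermitian pairing `h(α,β) := BC α (σ β)` makes the Hodge pieces
pairwise orthogonal and is positive definite on `H^{2,0}`, `H^{0,2}` and negative definite on
`H^{1,1}`;
(iii) the product is a morphism of Hodge structures of bidegree `(-1,-1)`:
`H^{p,q}·H^{p',q'} ⊆ H^{p+p'-1,q+q'-1}`;
(iv) an adjunction `t`: a `ℚ`-linear involution with `t(ab) = t(b)t(a)`,
`⟨ab,c⟩ = ⟨b, t(a)c⟩` and `⟨ab,c⟩ = ⟨a, c·t(b)⟩`. -/
structure HodgeAlgebraData where
  H20 : Submodule ℂ (ℂ ⊗[ℚ] H)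
  H11 : Submodule ℂ (ℂ ⊗[ℚ] H)
  H02 : Submodule ℂ (ℂ ⊗[ℚ] H)
  sup_top : H20 ⊔ H11 ⊔ H02 = ⊤
  disj1 : H20 ⊓ (H11 ⊔ H02) = ⊥
  disj2 : H11 ⊓ H02 = ⊥
  sigma_20 : ∀ x ∈ H20, sigmaC H x ∈ H02
  sigma_02 : ∀ x ∈ H02, sigmaC H x ∈ H20
  sigma_11 : ∀ x ∈ H11, sigmaC H x ∈ H11
  B : H →ₗ[ℚ] H →ₗ[ℚ] ℚ
  B_symm : ∀ a b : H, B a b = B b a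
  BC : (ℂ ⊗[ℚ] H) →ₗ[ℂ] (ℂ ⊗[ℚ] H) →ₗ[ℂ] ℂ
  BC_extends : ∀ a b : H, BC (inclH H a) (inclH H b) = (B a b : ℂ)
  BC_symm : ∀ x y, BC x y = BC y x
  BC_conj : ∀ x y, BC (sigmaC H x) (sigmaC H y) = starRingEnd ℂ (BC x y)
  orth_20_11 : ∀ x ∈ H20, ∀ y ∈ H11, BC x (sigmaC H y) = 0
  orth_20_02 : ∀ x ∈ H20, ∀ y ∈ H02, BC x (sigmaC H y) = 0
  orth_11_02 : ∀ x ∈ H11, ∀ y ∈ H02, BC x (sigmaC H y) = 0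
  pos_20 : ∀ x ∈ H20, x ≠ 0 → 0 < (BC x (sigmaC H x)).re ∧ (BC x (sigmaC H x)).im = 0
  pos_02 : ∀ x ∈ H02, x ≠ 0 → 0 < (BC x (sigmaC H x)).re ∧ (BC x (sigmaC H x)).im = 0
  neg_11 : ∀ x ∈ H11, x ≠ 0 → (BC x (sigmaC H x)).re < 0 ∧ (BC x (sigmaC H x)).im = 0
  mul_20_20 : ∀ x ∈ H20, ∀ y ∈ H20, x * y = 0
  mul_20_11 : ∀ x ∈ H20, ∀ y ∈ H11, x * y ∈ H20
  mul_11_20 : ∀ x ∈ H11, ∀ y ∈ H20, x * y ∈ H20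
  mul_11_11 : ∀ x ∈ H11, ∀ y ∈ H11, x * y ∈ H11
  mul_20_02 : ∀ x ∈ H20, ∀ y ∈ H02, x * y ∈ H11
  mul_02_20 : ∀ x ∈ H02, ∀ y ∈ H20, x * y ∈ H11
  mul_02_02 : ∀ x ∈ H02, ∀ y ∈ H02, x * y = 0
  mul_11_02 : ∀ x ∈ H11, ∀ y ∈ H02, x * y ∈ H02
  mul_02_11 : ∀ x ∈ H02, ∀ y ∈ H11, x * y ∈ H02
  t : H →ₗ[ℚ] H
  t_invol : ∀ a : H, t (t a) = a
  t_mul : ∀ a b : H, t (a * b) = t b * t a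
  adj_left : ∀ a b c : H, B (a * b) c = B b (t a * c)
  adj_right : ∀ a b c : H, B (a * b) c = B a (c * t b)

variable {H}

/-- `W := H^{2,0}·H_ℂ`, the `ℂ`-linear span of all products `x·y` with `x ∈ H^{2,0}`,
`y ∈ H_ℂ`. -/
def HodgeAlgebraData.W (D : HodgeAlgebraData H) : Submodule ℂ (ℂ ⊗[ℚ] H) := D.H20 * ⊤

/-- `σ(W)`, the image of `W` under the conjugation `σ`, as a `ℚ`-subspace of `H_ℂ`. -/
def HodgeAlgebraData.sigmaW (D : HodgeAlgebraData H) : Submodule ℚ (ℂ ⊗[ℚ] H) :=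
  (D.W.restrictScalars ℚ).map (sigmaC H)

/-- The `ℂ`-linear extension of `t` to `H_ℂ`. -/
def HodgeAlgebraData.tC (D : HodgeAlgebraData H) : ℂ ⊗[ℚ] H →ₗ[ℂ] ℂ ⊗[ℚ] H :=
  LinearMap.baseChange ℂ D.t

section Infra

variable {H : Type} [Ring H] [Algebra ℚ H] [FiniteDimensional ℚ H]

/-- `σ` as an algebra homomorphism. -/
def sigA : (ℂ ⊗[ℚ] H) →ₐ[ℚ] (ℂ ⊗[ℚ] H) :=
  Algebra.TensorProduct.map conjQAlg (AlgHom.id ℚ H)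

lemma sigmaC_eq (x : ℂ ⊗[ℚ] H) : sigmaC H x = sigA x := rfl

lemma sig_mul (x y : ℂ ⊗[ℚ] H) : sigmaC H (x * y) = sigmaC H x * sigmaC H y := by
  simp [sigmaC_eq, map_mul]

lemma sig_tmul (s : ℂ) (a : H) :
    sigmaC H (s ⊗ₜ[ℚ] a) = (starRingEnd ℂ s) ⊗ₜ[ℚ] a := rfl

lemma sig_sig (x : ℂ ⊗[ℚ] H) : sigmaC H (sigmaC H x) = x := by
  induction x using TensorProduct.induction_on with
  | zero => simp
  | tmul s a => rw [sig_tmul, sig_tmul, Complex.conj_conj]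
  | add x y hx hy => rw [map_add, map_add, hx, hy]

lemma sig_inclH (a : H) : sigmaC H (inclH H a) = inclH H a := by
  show sigmaC H ((1:ℂ) ⊗ₜ[ℚ] a) = _
  rw [sig_tmul, map_one]; rfl

lemma incl_induction {p : ℂ ⊗[ℚ] H → Prop} (h0 : p 0)
    (hi : ∀ a : H, p (inclH H a))
    (hadd : ∀ x y, p x → p y → p (x + y))
    (hsmul : ∀ (s : ℂ) x, p x → p (s • x)) : ∀ x, p x := by
  intro x
  induction x using TensorProduct.induction_on with
  | zero => exact h0
  | tmul s a =>
      have : s ⊗ₜ[ℚ] a = s • ((1:ℂ) ⊗ₜ[ℚ] a) := by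
        rw [TensorProduct.smul_tmul', smul_eq_mul, mul_one]
      rw [this]
      exact hsmul s _ (hi a)
  | add x y hx hy => exact hadd x y hx hy

lemma inclH_injective : Function.Injective (inclH H) := by
  have hf : Function.Injective (Algebra.linearMap ℚ ℂ) := by
    intro x y h
    exact (algebraMap ℚ ℂ).injective h
  have h2 : Function.Injective (LinearMap.rTensor H (Algebra.linearMap ℚ ℂ)) :=
    Module.Flat.rTensor_preserves_injective_linearMap _ hf
  intro a b hab
  have : (LinearMap.rTensor H (Algebra.linearMap ℚ ℂ)) ((1:ℚ) ⊗ₜ[ℚ] a)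
      = (LinearMap.rTensor H (Algebra.linearMap ℚ ℂ)) ((1:ℚ) ⊗ₜ[ℚ] b) := by
    simp only [LinearMap.rTensor_tmul, Algebra.linearMap_apply, map_one]
    exact hab
  have := h2 this
  have := congrArg (TensorProduct.lid ℚ H) this
  simpa using this

end Infra
section Infra2

set_option linter.unusedSectionVars false

variable {H : Type} [Ring H] [Algebra ℚ H] [FiniteDimensional ℚ H] (D : HodgeAlgebraData H)

lemma tC_inclH (a : H) : D.tC (inclH H a) = inclH H (D.t a) := by
  show D.tC ((1:ℂ) ⊗ₜ[ℚ] a) = (1:ℂ) ⊗ₜ[ℚ] (D.t a)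
  simp [HodgeAlgebraData.tC]

lemma tC_tC (x : ℂ ⊗[ℚ] H) : D.tC (D.tC x) = x := by
  induction x using incl_induction with
  | h0 => simp
  | hi a => rw [tC_inclH, tC_inclH, D.t_invol]
  | hadd x y hx hy => rw [map_add, map_add, hx, hy]
  | hsmul s x hx => rw [map_smul, map_smul, hx]

lemma tC_mul (x y : ℂ ⊗[ℚ] H) : D.tC (x * y) = D.tC y * D.tC x := by
  induction x using incl_induction with
  | h0 => simp
  | hadd x x' hx hx' => rw [add_mul, map_add, hx, hx', map_add, mul_add]
  | hsmul s x hx => rw [smul_mul_assoc, map_smul, hx, map_smul, mul_smul_comm]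
  | hi a =>
    induction y using incl_induction with
    | h0 => simp
    | hadd y y' hy hy' => rw [mul_add, map_add, hy, hy', map_add, add_mul]
    | hsmul s y hy => rw [mul_smul_comm, map_smul, hy, map_smul, smul_mul_assoc]
    | hi b =>
      rw [← map_mul, tC_inclH, tC_inclH, tC_inclH, D.t_mul, map_mul]

lemma BC_adj_left (x y z : ℂ ⊗[ℚ] H) : D.BC (x * y) z = D.BC y (D.tC x * z) := by
  induction x using incl_induction with
  | h0 => simp
  | hadd x x' hx hx' => rw [add_mul, map_add, LinearMap.add_apply, hx, hx', map_add,
      add_mul, map_add]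
  | hsmul s x hx => rw [smul_mul_assoc, map_smul, LinearMap.smul_apply, hx, map_smul,
      smul_mul_assoc, map_smul]
  | hi a =>
    induction y using incl_induction with
    | h0 => simp
    | hadd y y' hy hy' => rw [mul_add, map_add, LinearMap.add_apply, hy, hy', map_add,
        LinearMap.add_apply]
    | hsmul s y hy => rw [mul_smul_comm, map_smul, LinearMap.smul_apply, hy, map_smul,
        LinearMap.smul_apply]
    | hi c =>
      induction z using incl_induction with
      | h0 => simp
      | hadd z z' hz hz' => rw [map_add, mul_add, map_add, hz, hz']
      | hsmul s z hz => rw [map_smul, mul_smul_comm, map_smul, hz]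
      | hi b =>
        rw [← map_mul, tC_inclH, ← map_mul, D.BC_extends, D.BC_extends, D.adj_left]

lemma h_conj (x y : ℂ ⊗[ℚ] H) :
    D.BC y (sigmaC H x) = starRingEnd ℂ (D.BC x (sigmaC H y)) := by
  rw [D.BC_symm y (sigmaC H x), ← sig_sig y, ← D.BC_conj, sig_sig, sig_sig]

lemma h_adj (x u y : ℂ ⊗[ℚ] H) :
    D.BC (x * u) (sigmaC H y) = D.BC u (sigmaC H (sigmaC H (D.tC x) * y)) := by
  rw [BC_adj_left, sig_mul, sig_sig]

end Infra2
section Infra3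

set_option linter.unusedSectionVars false

variable {H : Type} [Ring H] [Algebra ℚ H] [FiniteDimensional ℚ H] (D : HodgeAlgebraData H)

lemma exists_decomp (u : ℂ ⊗[ℚ] H) :
    ∃ p q r, p ∈ D.H20 ∧ q ∈ D.H11 ∧ r ∈ D.H02 ∧ u = p + q + r := by
  have hu : u ∈ D.H20 ⊔ D.H11 ⊔ D.H02 := by rw [D.sup_top]; trivial
  obtain ⟨x, hx, r, hr, hxr⟩ := Submodule.mem_sup.mp hu
  obtain ⟨p, hp, q, hq, hpq⟩ := Submodule.mem_sup.mp hx
  exact ⟨p, q, r, hp, hq, hr, by rw [← hxr, ← hpq]⟩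

lemma decomp_zero {p q r : ℂ ⊗[ℚ] H} (hp : p ∈ D.H20) (hq : q ∈ D.H11) (hr : r ∈ D.H02)
    (h : p + q + r = 0) : p = 0 ∧ q = 0 ∧ r = 0 := by
  have hp' : p ∈ D.H20 ⊓ (D.H11 ⊔ D.H02) := by
    refine ⟨hp, ?_⟩
    have : p = -(q + r) := by rw [eq_neg_iff_add_eq_zero]; rw [← h]; abel
    rw [this]
    exact neg_mem (add_mem (Submodule.mem_sup_left hq) (Submodule.mem_sup_right hr))
  rw [D.disj1] at hp'
  have hp0 : p = 0 := hp'
  have hqr : q + r = 0 := by rwa [hp0, zero_add] at h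
  have hq' : q ∈ D.H11 ⊓ D.H02 := by
    refine ⟨hq, ?_⟩
    have : q = -r := eq_neg_of_add_eq_zero_left hqr
    rw [this]; exact neg_mem hr
  rw [D.disj2] at hq'
  have hq0 : q = 0 := hq'
  refine ⟨hp0, hq0, by rwa [hq0, zero_add] at hqr⟩

-- reversed orthogonality
lemma orth_11_20 : ∀ x ∈ D.H11, ∀ y ∈ D.H20, D.BC x (sigmaC H y) = 0 := by
  intro x hx y hy
  rw [h_conj, D.orth_20_11 y hy x hx, map_zero]

lemma orth_02_20 : ∀ x ∈ D.H02, ∀ y ∈ D.H20, D.BC x (sigmaC H y) = 0 := by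
  intro x hx y hy
  rw [h_conj, D.orth_20_02 y hy x hx, map_zero]

lemma orth_02_11 : ∀ x ∈ D.H02, ∀ y ∈ D.H11, D.BC x (sigmaC H y) = 0 := by
  intro x hx y hy
  rw [h_conj, D.orth_11_02 y hy x hx, map_zero]

lemma zero20 {x : ℂ ⊗[ℚ] H} (hx : x ∈ D.H20) (h : D.BC x (sigmaC H x) = 0) : x = 0 := by
  by_contra hne
  have := (D.pos_20 x hx hne).1
  rw [h] at this; simp at this

lemma zero11 {x : ℂ ⊗[ℚ] H} (hx : x ∈ D.H11) (h : D.BC x (sigmaC H x) = 0) : x = 0 := by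
  by_contra hne
  have := (D.neg_11 x hx hne).1
  rw [h] at this; simp at this

lemma one_mem_11 : (1 : ℂ ⊗[ℚ] H) ∈ D.H11 := by
  obtain ⟨e2, e1, e0, m2, m1, m0, he⟩ := exists_decomp D 1
  have id1 : ∀ u, e1 * u = u := by
    have base : ∀ p ∈ D.H20, ∀ q ∈ D.H11, ∀ r ∈ D.H02, e1 * (p + q + r) = p + q + r := by
      intro p hp q hq r hr
      have h20 : e1 * p = p := by
        have hsum : p = e2 * p + e1 * p + e0 * p := by
          calc p = 1 * p := (one_mul p).symm
          _ = (e2 + e1 + e0) * p := by rw [← he]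
          _ = e2 * p + e1 * p + e0 * p := by rw [add_mul, add_mul]
        have h2p : e2 * p = 0 := D.mul_20_20 e2 m2 p hp
        have : (e1 * p - p) + (e0 * p) + 0 = 0 := by
          rw [add_zero, sub_add_eq_add_sub, sub_eq_zero]
          conv_rhs => rw [hsum, h2p, zero_add]
        obtain ⟨a1, -, -⟩ := decomp_zero D (sub_mem (D.mul_11_20 e1 m1 p hp) hp)
          (D.mul_02_20 e0 m0 p hp) (zero_mem _) this
        rwa [sub_eq_zero] at a1
      have h11 : e1 * q = q := by
        have hsum : q = e2 * q + e1 * q + e0 * q := by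
          calc q = 1 * q := (one_mul q).symm
          _ = (e2 + e1 + e0) * q := by rw [← he]
          _ = e2 * q + e1 * q + e0 * q := by rw [add_mul, add_mul]
        have : (e2 * q) + (e1 * q - q) + (e0 * q) = 0 := by
          have : e2 * q + (e1 * q - q) + e0 * q = (e2 * q + e1 * q + e0 * q) - q := by abel
          rw [this, ← hsum, sub_self]
        obtain ⟨-, a1, -⟩ := decomp_zero D (D.mul_20_11 e2 m2 q hq)
          (sub_mem (D.mul_11_11 e1 m1 q hq) hq) (D.mul_02_11 e0 m0 q hq) this
        rwa [sub_eq_zero] at a1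
      have h02 : e1 * r = r := by
        have hsum : r = e2 * r + e1 * r + e0 * r := by
          calc r = 1 * r := (one_mul r).symm
          _ = (e2 + e1 + e0) * r := by rw [← he]
          _ = e2 * r + e1 * r + e0 * r := by rw [add_mul, add_mul]
        have h0r : e0 * r = 0 := D.mul_02_02 e0 m0 r hr
        have : (0 : ℂ ⊗[ℚ] H) + (e2 * r) + (e1 * r - r) = 0 := by
          have h' : (0:ℂ ⊗[ℚ] H) + e2 * r + (e1 * r - r) = (e2 * r + e1 * r + e0 * r) - r - e0 * r := by
            rw [h0r]; abel
          rw [h', ← hsum, sub_self, zero_sub, h0r, neg_zero]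
        obtain ⟨-, -, a1⟩ := decomp_zero D (zero_mem _) (D.mul_20_02 e2 m2 r hr)
          (sub_mem (D.mul_11_02 e1 m1 r hr) hr) this
        rwa [sub_eq_zero] at a1
      rw [mul_add, mul_add, h20, h11, h02]
    intro u
    obtain ⟨p, q, r, hp, hq, hr, rfl⟩ := exists_decomp D u
    exact base p hp q hq r hr
  have he1 : e1 = 1 := by have := id1 1; rwa [mul_one] at this
  have hsum0 : e2 + 0 + e0 = 0 := by
    have : e2 + e0 = (e2 + e1 + e0) - e1 := by abel
    rw [add_zero, this, ← he, he1, sub_self]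
  obtain ⟨a2, -, a0⟩ := decomp_zero D m2 (zero_mem _) m0 hsum0
  rw [he, a2, a0, zero_add, add_zero]
  exact m1

end Infra3
section Infra4

set_option linter.unusedSectionVars false

variable {H : Type} [Ring H] [Algebra ℚ H] [FiniteDimensional ℚ H] (D : HodgeAlgebraData H)

/-- Being central in `H_ℂ`. -/
def IsCent (u : ℂ ⊗[ℚ] H) : Prop := ∀ v, u * v = v * u

lemma isCent_sig {u : ℂ ⊗[ℚ] H} (hu : IsCent u) : IsCent (sigmaC H u) := by
  intro v
  calc sigmaC H u * v = sigmaC H u * sigmaC H (sigmaC H v) := by rw [sig_sig]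
  _ = sigmaC H (u * sigmaC H v) := (sig_mul _ _).symm
  _ = sigmaC H (sigmaC H v * u) := by rw [hu]
  _ = sigmaC H (sigmaC H v) * sigmaC H u := sig_mul _ _
  _ = v * sigmaC H u := by rw [sig_sig]

lemma isCent_tC {u : ℂ ⊗[ℚ] H} (hu : IsCent u) : IsCent (D.tC u) := by
  intro v
  calc D.tC u * v = D.tC u * D.tC (D.tC v) := by rw [tC_tC]
  _ = D.tC (D.tC v * u) := (tC_mul _ _ _).symm
  _ = D.tC (u * D.tC v) := by rw [hu]
  _ = D.tC (D.tC v) * D.tC u := tC_mul _ _ _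
  _ = v * D.tC u := by rw [tC_tC]

lemma isCent_inclH {z : H} (hz : z ∈ Subring.center H) : IsCent (inclH H z) := by
  intro v
  induction v using incl_induction with
  | h0 => simp
  | hi a =>
      rw [← map_mul, ← map_mul]
      congr 1
      exact (Subring.mem_center_iff.mp hz a).symm
  | hadd x y hx hy => rw [mul_add, add_mul, hx, hy]
  | hsmul s x hx => rw [mul_smul_comm, smul_mul_assoc, hx]

lemma isCent_mul {u v : ℂ ⊗[ℚ] H} (hu : IsCent u) (hv : IsCent v) : IsCent (u * v) := by
  intro w
  rw [mul_assoc, hv w, ← mul_assoc, hu w, mul_assoc]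

/-- `t` preserves `H^{2,0}`. -/
lemma tC_mem_20 {a : ℂ ⊗[ℚ] H} (ha : a ∈ D.H20) : D.tC a ∈ D.H20 := by
  set w := sigmaC H (D.tC a) with hw
  have key : ∀ x y : ℂ ⊗[ℚ] H, D.BC (a * x) (sigmaC H y) = D.BC x (sigmaC H (w * y)) := by
    intro x y
    have := h_adj D a x y
    rwa [← hw] at this
  obtain ⟨w2, w1, w0, m2, m1, m0, hdec⟩ := exists_decomp D w
  have k20 : w2 = 0 := by
    apply zero20 D m2
    have e1 := key w2 1
    rw [D.mul_20_20 a ha w2 m2, map_zero, LinearMap.zero_apply, mul_one, hdec] at e1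
    rw [map_add, map_add, map_add, map_add, D.orth_20_11 w2 m2 w1 m1,
      D.orth_20_02 w2 m2 w0 m0, add_zero, add_zero] at e1
    exact e1.symm
  have k11 : w1 = 0 := by
    apply zero11 D m1
    have e1 := key w1 1
    rw [mul_one, hdec, k20] at e1
    rw [D.orth_20_11 (a * w1) (D.mul_20_11 a ha w1 m1) 1 (one_mem_11 D)] at e1
    rw [map_add, map_add, map_add, map_add, map_zero, map_zero, zero_add,
      D.orth_11_02 w1 m1 w0 m0, add_zero] at e1
    exact e1.symm
  have hw02 : w ∈ D.H02 := by rw [hdec, k20, k11, zero_add, zero_add]; exact m0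
  have : D.tC a = sigmaC H w := by rw [hw, sig_sig]
  rw [this]
  exact D.sigma_02 w hw02

/-- `t` preserves `H^{1,1}`. -/
lemma tC_mem_11 {a : ℂ ⊗[ℚ] H} (ha : a ∈ D.H11) : D.tC a ∈ D.H11 := by
  set w := sigmaC H (D.tC a) with hw
  have key : ∀ x y : ℂ ⊗[ℚ] H, D.BC (a * x) (sigmaC H y) = D.BC x (sigmaC H (w * y)) := by
    intro x y
    have := h_adj D a x y
    rwa [← hw] at this
  obtain ⟨w2, w1, w0, m2, m1, m0, hdec⟩ := exists_decomp D w
  have k20 : w2 = 0 := by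
    apply zero20 D m2
    have e1 := key w2 1
    rw [mul_one, hdec] at e1
    rw [D.orth_20_11 (a * w2) (D.mul_11_20 a ha w2 m2) 1 (one_mem_11 D)] at e1
    rw [map_add, map_add, map_add, map_add, D.orth_20_11 w2 m2 w1 m1,
      D.orth_20_02 w2 m2 w0 m0, add_zero, add_zero] at e1
    exact e1.symm
  have k02 : w0 = 0 := by
    by_contra hne
    have e1 := key w0 1
    rw [mul_one, hdec, k20] at e1
    rw [orth_02_11 D (a * w0) (D.mul_11_02 a ha w0 m0) 1 (one_mem_11 D)] at e1
    rw [map_add, map_add, map_add, map_add, map_zero, map_zero, zero_add,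
      orth_02_11 D w0 m0 w1 m1, zero_add] at e1
    have := (D.pos_02 w0 m0 hne).1
    rw [← e1] at this; simp at this
  have hw11 : w ∈ D.H11 := by rw [hdec, k20, k02, zero_add, add_zero]; exact m1
  have : D.tC a = sigmaC H w := by rw [hw, sig_sig]
  rw [this]
  exact D.sigma_11 w hw11

end Infra4
section Infra5

set_option linter.unusedSectionVars false

variable {H : Type} [Ring H] [Algebra ℚ H] [FiniteDimensional ℚ H] (D : HodgeAlgebraData H)

/-- A central element of `H^{2,0}` is zero. -/
lemma cent20_zero {a : ℂ ⊗[ℚ] H} (ha : a ∈ D.H20) (hc : IsCent a) : a = 0 := by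
  set w := sigmaC H (D.tC a) with hw
  have hw02 : w ∈ D.H02 := D.sigma_20 _ (tC_mem_20 D ha)
  have wc : IsCent w := isCent_sig (isCent_tC D hc)
  have key : ∀ x y : ℂ ⊗[ℚ] H, D.BC (a * x) (sigmaC H y) = D.BC x (sigmaC H (w * y)) := by
    intro x y; have := h_adj D a x y; rwa [← hw] at this
  set m := w * a with hm
  have hm11 : m ∈ D.H11 := D.mul_02_20 w hw02 a ha
  have haa : a * a = 0 := D.mul_20_20 a ha a ha
  have hmm : m * m = 0 := by
    calc (w * a) * (w * a) = w * ((a * w) * a) := by rw [mul_assoc, mul_assoc]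
    _ = w * ((w * a) * a) := by rw [hc w]
    _ = w * (w * (a * a)) := by rw [mul_assoc]
    _ = 0 := by rw [haa, mul_zero, mul_zero]
  have selfadj : ∀ x y : ℂ ⊗[ℚ] H,
      D.BC (m * x) (sigmaC H y) = D.BC x (sigmaC H (m * y)) := by
    intro x y
    have key2 : D.BC (w * (a * x)) (sigmaC H y) = D.BC (a * x) (sigmaC H (a * y)) := by
      rw [h_conj]
      have := key y (a * x)
      rw [← this, h_conj]
      exact Complex.conj_conj _
    calc D.BC ((w * a) * x) (sigmaC H y) = D.BC (w * (a * x)) (sigmaC H y) := by rw [mul_assoc]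
    _ = D.BC (a * x) (sigmaC H (a * y)) := key2
    _ = D.BC x (sigmaC H (w * (a * y))) := key x (a * y)
    _ = D.BC x (sigmaC H ((w * a) * y)) := by rw [mul_assoc]
  have step1 : ∀ x ∈ D.H11, m * x = 0 := by
    intro x hx
    apply zero11 D (D.mul_11_11 m hm11 x hx)
    rw [selfadj x (m * x), ← mul_assoc, hmm, zero_mul, map_zero, map_zero]
  have step2 : ∀ x ∈ D.H11, a * x = 0 := by
    intro x hx
    apply zero20 D (D.mul_20_11 a ha x hx)
    rw [key x (a * x), ← mul_assoc, ← hm, step1 x hx, map_zero, map_zero]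
  have := step2 1 (one_mem_11 D)
  rwa [mul_one] at this

/-- A central square-zero element of `H^{1,1}` is zero. -/
lemma cent11_sq_zero {b : ℂ ⊗[ℚ] H} (hb : b ∈ D.H11) (hc : IsCent b) (hbb : b * b = 0) :
    b = 0 := by
  set w := sigmaC H (D.tC b) with hw
  have hw11 : w ∈ D.H11 := D.sigma_11 _ (tC_mem_11 D hb)
  have wc : IsCent w := isCent_sig (isCent_tC D hc)
  have key : ∀ x y : ℂ ⊗[ℚ] H, D.BC (b * x) (sigmaC H y) = D.BC x (sigmaC H (w * y)) := by
    intro x y; have := h_adj D b x y; rwa [← hw] at this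
  set m := w * b with hm
  have hm11 : m ∈ D.H11 := D.mul_11_11 w hw11 b hb
  have hmm : m * m = 0 := by
    calc (w * b) * (w * b) = w * ((b * w) * b) := by rw [mul_assoc, mul_assoc]
    _ = w * ((w * b) * b) := by rw [hc w]
    _ = w * (w * (b * b)) := by rw [mul_assoc]
    _ = 0 := by rw [hbb, mul_zero, mul_zero]
  have selfadj : ∀ x y : ℂ ⊗[ℚ] H,
      D.BC (m * x) (sigmaC H y) = D.BC x (sigmaC H (m * y)) := by
    intro x y
    have key2 : D.BC (w * (b * x)) (sigmaC H y) = D.BC (b * x) (sigmaC H (b * y)) := by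
      rw [h_conj]
      have := key y (b * x)
      rw [← this, h_conj]
      exact Complex.conj_conj _
    calc D.BC ((w * b) * x) (sigmaC H y) = D.BC (w * (b * x)) (sigmaC H y) := by rw [mul_assoc]
    _ = D.BC (b * x) (sigmaC H (b * y)) := key2
    _ = D.BC x (sigmaC H (w * (b * y))) := key x (b * y)
    _ = D.BC x (sigmaC H ((w * b) * y)) := by rw [mul_assoc]
  have step1 : ∀ x ∈ D.H11, m * x = 0 := by
    intro x hx
    apply zero11 D (D.mul_11_11 m hm11 x hx)
    rw [selfadj x (m * x), ← mul_assoc, hmm, zero_mul, map_zero, map_zero]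
  have step2 : ∀ x ∈ D.H11, b * x = 0 := by
    intro x hx
    apply zero11 D (D.mul_11_11 b hb x hx)
    rw [key x (b * x), ← mul_assoc, ← hm, step1 x hx, map_zero, map_zero]
  have := step2 1 (one_mem_11 D)
  rwa [mul_one] at this

end Infra5
section Infra6

set_option linter.unusedSectionVars false

variable {H : Type} [Ring H] [Algebra ℚ H] [FiniteDimensional ℚ H]

lemma central_sq_zero (D : HodgeAlgebraData H) {z : H} (hz : z ∈ Subring.center H) (hzz : z * z = 0) : z = 0 := by
  set ζ := inclH H z with hζ
  have hcent : IsCent ζ := isCent_inclH hz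
  obtain ⟨a, b, c, ma, mb, mc, hdec⟩ := exists_decomp D ζ
  -- components of a central element are central
  have compc : IsCent a ∧ IsCent b ∧ IsCent c := by
    have base : ∀ u, (u ∈ D.H20 ∨ u ∈ D.H11 ∨ u ∈ D.H02) →
        a * u = u * a ∧ b * u = u * b ∧ c * u = u * c := by
      rintro u (hu | hu | hu)
      · have hau : a * u = 0 := D.mul_20_20 a ma u hu
        have hua : u * a = 0 := D.mul_20_20 u hu a ma
        have hsum : (b * u - u * b) + (c * u - u * c) + 0 = 0 := by
          rw [add_zero, sub_add_sub_comm, sub_eq_zero]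
          have h1 := hcent u
          rw [hdec, add_mul, add_mul, mul_add, mul_add, hau, hua, zero_add, zero_add] at h1
          exact h1
        obtain ⟨e1, e2, -⟩ := decomp_zero D
          (sub_mem (D.mul_11_20 b mb u hu) (D.mul_20_11 u hu b mb))
          (sub_mem (D.mul_02_20 c mc u hu) (D.mul_20_02 u hu c mc)) (zero_mem _) hsum
        exact ⟨by rw [hau, hua], sub_eq_zero.mp e1, sub_eq_zero.mp e2⟩
      · have hsum : (a * u - u * a) + (b * u - u * b) + (c * u - u * c) = 0 := by
          rw [sub_add_sub_comm, sub_add_sub_comm, sub_eq_zero]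
          have h1 := hcent u
          rw [hdec, add_mul, add_mul, mul_add, mul_add] at h1
          exact h1
        obtain ⟨e1, e2, e3⟩ := decomp_zero D
          (sub_mem (D.mul_20_11 a ma u hu) (D.mul_11_20 u hu a ma))
          (sub_mem (D.mul_11_11 b mb u hu) (D.mul_11_11 u hu b mb))
          (sub_mem (D.mul_02_11 c mc u hu) (D.mul_11_02 u hu c mc)) hsum
        exact ⟨sub_eq_zero.mp e1, sub_eq_zero.mp e2, sub_eq_zero.mp e3⟩
      · have hcu : c * u = 0 := D.mul_02_02 c mc u hu
        have huc : u * c = 0 := D.mul_02_02 u hu c mc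
        have hsum : (0 : ℂ ⊗[ℚ] H) + (a * u - u * a) + (b * u - u * b) = 0 := by
          rw [zero_add, sub_add_sub_comm, sub_eq_zero]
          have h1 := hcent u
          rw [hdec, add_mul, add_mul, mul_add, mul_add, hcu, huc, add_zero, add_zero] at h1
          exact h1
        obtain ⟨-, e1, e2⟩ := decomp_zero D (zero_mem _)
          (sub_mem (D.mul_20_02 a ma u hu) (D.mul_02_20 u hu a ma))
          (sub_mem (D.mul_11_02 b mb u hu) (D.mul_02_11 u hu b mb)) hsum
        exact ⟨sub_eq_zero.mp e1, sub_eq_zero.mp e2, by rw [hcu, huc]⟩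
    have gen : ∀ x, a * x = x * a ∧ b * x = x * b ∧ c * x = x * c := by
      intro x
      obtain ⟨p, q, r, hp, hq, hr, rfl⟩ := exists_decomp D x
      obtain ⟨p1, p2, p3⟩ := base p (Or.inl hp)
      obtain ⟨q1, q2, q3⟩ := base q (Or.inr (Or.inl hq))
      obtain ⟨r1, r2, r3⟩ := base r (Or.inr (Or.inr hr))
      refine ⟨?_, ?_, ?_⟩
      · rw [mul_add, mul_add, add_mul, add_mul, p1, q1, r1]
      · rw [mul_add, mul_add, add_mul, add_mul, p2, q2, r2]
      · rw [mul_add, mul_add, add_mul, add_mul, p3, q3, r3]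
    exact ⟨fun v => (gen v).1, fun v => (gen v).2.1, fun v => (gen v).2.2⟩
  obtain ⟨ca, cb, cc⟩ := compc
  have ha0 : a = 0 := cent20_zero D ma ca
  have hc0 : c = 0 := by
    have h1 : sigmaC H c ∈ D.H20 := D.sigma_02 c mc
    have h2 : sigmaC H c = 0 := cent20_zero D h1 (isCent_sig cc)
    have := congrArg (sigmaC H) h2
    rwa [sig_sig, map_zero] at this
  have hζb : ζ = b := by rw [hdec, ha0, hc0, zero_add, add_zero]
  have hbb : b * b = 0 := by
    rw [← hζb, hζ, ← map_mul, hzz, map_zero]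
  have hb0 : b = 0 := cent11_sq_zero D mb cb hbb
  have : inclH H z = inclH H 0 := by rw [map_zero, ← hζ, hζb, hb0]
  exact inclH_injective this

lemma central_nilpotent_zero (D : HodgeAlgebraData H) {z : H} (hz : z ∈ Subring.center H) (hn : IsNilpotent z) :
    z = 0 := by
  obtain ⟨n, hn⟩ := hn
  induction n generalizing z with
  | zero =>
      have h1 : (1 : H) = 0 := by rw [← pow_zero z, hn]
      calc z = z * 1 := (mul_one z).symm
      _ = z * 0 := by rw [h1]
      _ = 0 := mul_zero z
  | succ n ih =>
      rcases Nat.eq_zero_or_pos n with h0 | hpos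
      · rw [h0, pow_one] at hn; exact hn
      · have h2 : z ^ n * z ^ n = 0 := by
          rw [← pow_add]
          have : n + n = (n + 1) + (n - 1) := by omega
          rw [this, pow_add, hn, zero_mul]
        have hzn : z ^ n ∈ Subring.center H := pow_mem hz n
        have := central_sq_zero D hzn h2
        exact ih hz this

end Infra6
section Final

set_option linter.unusedSectionVars false
set_option maxHeartbeats 1000000

variable {H : Type} [Ring H] [Algebra ℚ H] [FiniteDimensional ℚ H]

lemma center_isReduced (D : HodgeAlgebraData H) : IsReduced (Subring.center H) := by
  constructor
  intro x hx
  obtain ⟨n, hn⟩ := hx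
  have hcoe : (x : H) ^ n = 0 := by
    have := congrArg (Subring.center H).subtype hn
    simpa using this
  have := central_nilpotent_zero D x.2 ⟨n, hcoe⟩
  exact Subtype.ext this

theorem center_reduced_product_of_number_fields'' (D : HodgeAlgebraData H) :
    IsReduced (Subring.center H) ∧
    ∃ (n : ℕ) (F : Fin n → IntermediateField ℚ ℂ),
      (∀ i, FiniteDimensional ℚ (F i)) ∧
      Nonempty ((Subring.center H) ≃+* ((i : Fin n) → F i)) := by
  classical
  have hred : IsReduced (Subring.center H) := center_isReduced D
  refine ⟨hred, ?_⟩
  set A := Subalgebra.center ℚ H with hA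
  have eAK : (A : Type) ≃+* Subring.center H :=
    RingEquiv.subringCongr (Subalgebra.center_toSubring ℚ H)
  haveI hredA : IsReduced A :=
    isReduced_of_injective (eAK : A →+* Subring.center H) eAK.injective
  haveI : IsArtinianRing A := isArtinian_of_tower ℚ inferInstance
  haveI : Finite {I : Ideal A | I.IsMaximal} := (IsArtinianRing.setOfPred_isMaximal_finite A).to_subtype
  -- each quotient embeds in ℂ as a finite-dimensional intermediate field
  have key : ∀ I : {I : Ideal A | I.IsMaximal}, ∃ F : IntermediateField ℚ ℂ,
      FiniteDimensional ℚ F ∧ Nonempty ((A ⧸ I.1) ≃+* F) := by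
    intro I
    haveI : I.1.IsMaximal := I.2
    letI : Field (A ⧸ I.1) := Ideal.Quotient.field I.1
    haveI : Module.Finite ℚ (A ⧸ I.1) :=
      Module.Finite.of_surjective (Ideal.Quotient.mkₐ ℚ I.1).toLinearMap
        (Ideal.Quotient.mkₐ_surjective ℚ I.1)
    haveI : NoZeroSMulDivisors ℚ (A ⧸ I.1) :=
      inferInstance
    haveI : Algebra.IsAlgebraic ℚ (A ⧸ I.1) := Algebra.IsAlgebraic.of_finite ℚ _
    let φ : (A ⧸ I.1) →ₐ[ℚ] ℂ := IsAlgClosed.lift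
    have eqv : (A ⧸ I.1) ≃ₐ[ℚ] φ.fieldRange := AlgEquiv.ofInjectiveField φ
    haveI : FiniteDimensional ℚ φ.fieldRange :=
      LinearEquiv.finiteDimensional eqv.toLinearEquiv
    exact ⟨φ.fieldRange, inferInstance, ⟨eqv.toRingEquiv⟩⟩
  choose Fld hFin hEqv using key
  obtain ⟨n, ⟨ε⟩⟩ := Finite.exists_equiv_fin {I : Ideal A | I.IsMaximal}
  refine ⟨n, fun i => Fld (ε.symm i), fun i => hFin _, ?_⟩
  have e1 : (A : Type) ≃+* ∀ I : {I : Ideal A | I.IsMaximal}, A ⧸ I.1 :=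
    (IsArtinianRing.equivPi A).toRingEquiv.trans
      (RingEquiv.piCongrLeft (fun I : {I : Ideal A | I.IsMaximal} => A ⧸ I.1)
        (MaximalSpectrum.equivSubtype A))
  have e2 : (∀ I : {I : Ideal A | I.IsMaximal}, A ⧸ I.1) ≃+*
      (∀ I : {I : Ideal A | I.IsMaximal}, Fld I) :=
    RingEquiv.piCongrRight fun I => (hEqv I).some
  have e3 : (∀ I : {I : Ideal A | I.IsMaximal}, Fld I) ≃+*
      (∀ i : Fin n, Fld (ε.symm i)) :=
    RingEquiv.piCongrLeft' (fun I => Fld I) ε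
  exact ⟨((eAK.symm.trans e1).trans e2).trans e3⟩

end Final
/-- The center `K := Z(H)` of the `ℚ`-algebra `H` is a reduced ring (it has
no nonzero nilpotents); consequently `K` is isomorphic as a ring to a finite product of
number fields (realized here as finite-dimensional intermediate fields of `ℚ ⊆ ℂ`). -/
theorem center_reduced_product_of_number_fields (D : HodgeAlgebraData H) :
    IsReduced (Subring.center H) ∧
    ∃ (n : ℕ) (F : Fin n → IntermediateField ℚ ℂ),
      (∀ i, FiniteDimensional ℚ (F i)) ∧
      Nonempty ((Subring.center H) ≃+* ((i : Fin n) → F i)) := by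
  exact center_reduced_product_of_number_fields'' D
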